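/- Strong Lagrange duality holds for the tracking stopping time problem: d(α) = sup_{λ≥0} min_{T≤κ} ( E(T−S)^+ + λ P(T<S) − λα ), where the inner minimization may be restricted to non-randomized stopping times bounded by κ. -/

import Mathlib

open Finset
open scoped Classical

noncomputable section

variable {Ω : Type*} [Fintype Ω] {𝒳 : Type*} {𝒴 : Type*}

/-- Probability of an event under weights `p` on a finite sample space. -/
def prW (p : Ω → ℝ) (A : Ω → Prop) : ℝ := ∑ ω, if A ω then p ω else 0

/-- Expectation under weights `p`. -/
def exW (p : Ω → ℝ) (f : Ω → ℝ) : ℝ := ∑ ω, p ω * f ω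

/-- `p` is a probability weight function. -/
def IsProbW (p : Ω → ℝ) : Prop := (∀ ω, 0 ≤ p ω) ∧ ∑ ω, p ω = 1

/-- Conditional probability `P(A | B)`. -/
def cprW (p : Ω → ℝ) (A B : Ω → Prop) : ℝ := prW p (fun ω => A ω ∧ B ω) / prW p B

/-- Conditional expectation `E(f | B)`. -/
def cexW (p : Ω → ℝ) (f : Ω → ℝ) (B : Ω → Prop) : ℝ :=
  (∑ ω, if B ω then p ω * f ω else 0) / prW p B

/-- positive part of a real number -/
def posP (x : ℝ) : ℝ := max x 0

/-- `S` is a (non-randomized) stopping time w.r.t. the process `X` (time starts at 1):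
its value is determined by the observations up to itself. -/
def IsSTW (X : ℕ → Ω → 𝒳) (S : Ω → ℕ) : Prop :=
  ∀ ω ω', (∀ i, 1 ≤ i → i ≤ S ω → X i ω = X i ω') → S ω' = S ω

/-- The path of the process `Y` at sample `ω`. -/
def pathOf (Y : ℕ → Ω → 𝒴) (ω : Ω) : ℕ → 𝒴 := fun i => Y i ω

/-- The path `f` extends (passes through) the node `y` (a finite string). -/
def ExtN (y : List 𝒴) (f : ℕ → 𝒴) : Prop := ∀ i : Fin y.length, f (i.1 + 1) = y.get i

/-- A stopping function on paths: its value depends only on the path up to that value.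
This is the path-representation of a non-randomized stopping time (a tree). -/
def IsStopFun (t : (ℕ → 𝒴) → ℕ) : Prop :=
  ∀ f g, (∀ i, 1 ≤ i → i ≤ t f → f i = g i) → t g = t f

/-- `y` is an internal node of the tree `t`. -/
def InternalNode (t : (ℕ → 𝒴) → ℕ) (y : List 𝒴) : Prop :=
  ∀ f, ExtN y f → y.length < t f

/-- `u` is (the stopping function of) a subtree rooted at node `y`. -/
def IsSubtreeAt (y : List 𝒴) (u : (ℕ → 𝒴) → ℕ) : Prop :=
  IsStopFun u ∧ ∀ f, ExtN y f → y.length ≤ u f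

/-- false-alarm weight `a(y)` of node `y` -/
def aW (p : Ω → ℝ) (Y : ℕ → Ω → 𝒴) (S : Ω → ℕ) (y : List 𝒴) : ℝ :=
  prW p (fun ω => ExtN y (pathOf Y ω) ∧ y.length < S ω)

/-- delay weight `b(y)` of node `y` -/
def bW (p : Ω → ℝ) (Y : ℕ → Ω → 𝒴) (S : Ω → ℕ) (y : List 𝒴) : ℝ :=
  exW p (fun ω => if ExtN y (pathOf Y ω) then posP ((y.length : ℝ) - (S ω : ℝ)) else 0)

/-- false-alarm weight `a(T_y)` of a subtree `u` rooted at `y` (the sum of `a(γ)`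
over its leaves `γ`). -/
def aSubW (p : Ω → ℝ) (Y : ℕ → Ω → 𝒴) (S : Ω → ℕ) (y : List 𝒴) (u : (ℕ → 𝒴) → ℕ) : ℝ :=
  prW p (fun ω => ExtN y (pathOf Y ω) ∧ u (pathOf Y ω) < S ω)

/-- delay weight `b(T_y)` of a subtree `u` rooted at `y` (the sum of `b(γ)` over its leaves). -/
def bSubW (p : Ω → ℝ) (Y : ℕ → Ω → 𝒴) (S : Ω → ℕ) (y : List 𝒴) (u : (ℕ → 𝒴) → ℕ) : ℝ :=
  exW p (fun ω => if ExtN y (pathOf Y ω) then posP ((u (pathOf Y ω) : ℝ) - (S ω : ℝ)) else 0)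

/-- Lagrangian cost `J_λ(T_y)` of the subtree `u` rooted at `y`. -/
def JsubW (p : Ω → ℝ) (Y : ℕ → Ω → 𝒴) (S : Ω → ℕ) (lam : ℝ) (y : List 𝒴)
    (u : (ℕ → 𝒴) → ℕ) : ℝ :=
  bSubW p Y S y u + lam * aSubW p Y S y u

/-- Lagrangian cost `J_λ(y)` of the single node `y`. -/
def JnodeW (p : Ω → ℝ) (Y : ℕ → Ω → 𝒴) (S : Ω → ℕ) (lam : ℝ) (y : List 𝒴) : ℝ :=
  bW p Y S y + lam * aW p Y S y

/-- `u` is the smallest minimal-cost rooted subtree `T_y(λ)` of `t` at node `y`,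
for Lagrange multiplier `lam`. -/
def IsOptSubtreeAt (p : Ω → ℝ) (Y : ℕ → Ω → 𝒴) (S : Ω → ℕ) (lam : ℝ)
    (t : (ℕ → 𝒴) → ℕ) (y : List 𝒴) (u : (ℕ → 𝒴) → ℕ) : Prop :=
  IsSubtreeAt y u ∧ (∀ f, ExtN y f → u f ≤ t f) ∧
  (∀ v, IsSubtreeAt y v → (∀ f, ExtN y f → v f ≤ t f) →
    JsubW p Y S lam y u ≤ JsubW p Y S lam y v) ∧
  (∀ v, IsSubtreeAt y v → (∀ f, ExtN y f → v f ≤ t f) →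
    JsubW p Y S lam y v = JsubW p Y S lam y u → ∀ f, ExtN y f → u f ≤ v f)

/-- the tradeoff quantity `g(y, T) = (b(T_y) - b(y)) / (a(y) - a(T_y))`
(with the convention 0/0 = 0, which holds automatically for real division). -/
def gW (p : Ω → ℝ) (Y : ℕ → Ω → 𝒴) (S : Ω → ℕ) (t : (ℕ → 𝒴) → ℕ) (y : List 𝒴) : ℝ :=
  (bSubW p Y S y t - bW p Y S y) / (aW p Y S y - aSubW p Y S y t)

/-- node permuted by a coordinate permutation -/
def permNode (y : List 𝒴) (π : Equiv.Perm (Fin y.length)) : List 𝒴 :=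
  List.ofFn fun i => y.get (π i)

/-- permutation invariance of a stopping time w.r.t. process `Y`:
`P(T ≤ n | Y^n = y^n) = P(T ≤ n | Y^n = π(y^n))`. -/
def PermInvST (p : Ω → ℝ) (Y : ℕ → Ω → 𝒴) (T : Ω → ℕ) (κ : ℕ) : Prop :=
  ∀ y : List 𝒴, y.length ≤ κ → ∀ π : Equiv.Perm (Fin y.length),
    cprW p (fun ω => T ω ≤ y.length) (fun ω => ExtN y (pathOf Y ω)) =
    cprW p (fun ω => T ω ≤ y.length) (fun ω => ExtN (permNode y π) (pathOf Y ω))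

/-- the pairs `(X_i, Y_i)` are i.i.d. (over the first `κ` time steps). -/
def IIDPairs [Fintype 𝒳] [Fintype 𝒴] (p : Ω → ℝ) (X : ℕ → Ω → 𝒳) (Y : ℕ → Ω → 𝒴)
    (κ : ℕ) : Prop :=
  ∃ μ : 𝒳 × 𝒴 → ℝ, (∀ z, 0 ≤ μ z) ∧ (∑ z, μ z = 1) ∧
    ∀ (x : ℕ → 𝒳) (yf : ℕ → 𝒴),
      prW p (fun ω => ∀ i, 1 ≤ i → i ≤ κ → X i ω = x i ∧ Y i ω = yf i) =
        ∏ i ∈ Finset.Icc 1 κ, μ (x i, yf i)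

/-- a randomized stopping time bounded by `κ`, given by its conditional stopping
kernel `q n y^n = P(T = n | Y^n = y^n)`. -/
def IsRandST (q : ℕ → (ℕ → 𝒴) → ℝ) (κ : ℕ) : Prop :=
  (∀ n f, 0 ≤ q n f) ∧
  (∀ n f g, (∀ i, 1 ≤ i → i ≤ n → f i = g i) → q n g = q n f) ∧
  (∀ f, ∑ n ∈ Finset.Icc 1 κ, q n f = 1)

/-- false-alarm probability `P(T < S)` of a randomized stopping time -/
def faR (p : Ω → ℝ) (Y : ℕ → Ω → 𝒴) (S : Ω → ℕ) (κ : ℕ) (q : ℕ → (ℕ → 𝒴) → ℝ) : ℝ :=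
  exW p (fun ω => ∑ n ∈ Finset.Icc 1 κ, q n (pathOf Y ω) * (if n < S ω then 1 else 0))

/-- expected reaction delay `E(T - S)⁺` of a randomized stopping time -/
def delayR (p : Ω → ℝ) (Y : ℕ → Ω → 𝒴) (S : Ω → ℕ) (κ : ℕ) (q : ℕ → (ℕ → 𝒴) → ℝ) : ℝ :=
  exW p (fun ω => ∑ n ∈ Finset.Icc 1 κ, q n (pathOf Y ω) * posP ((n : ℝ) - (S ω : ℝ)))

/-- the optimal tradeoff curve `d(α)` -/
def dW (p : Ω → ℝ) (Y : ℕ → Ω → 𝒴) (S : Ω → ℕ) (κ : ℕ) (α : ℝ) : ℝ :=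
  sInf {v | ∃ q, IsRandST q κ ∧ faR p Y S κ q ≤ α ∧ v = delayR p Y S κ q}

/-- the stopping kernel of a non-randomized stopping function -/
def detKer (t : (ℕ → 𝒴) → ℕ) : ℕ → (ℕ → 𝒴) → ℝ := fun n f => if t f = n then 1 else 0

/-- prefix of length `n` of a path (the node of depth `n` it visits) -/
def prefixOf (f : ℕ → 𝒴) (n : ℕ) : List 𝒴 := (List.range n).map fun i => f (i + 1)

/-- the one-step-lookahead node cost `c(y^n)` -/
def cnodeW (p : Ω → ℝ) (Y : ℕ → Ω → 𝒴) (S : Ω → ℕ) (lam : ℝ) (y : List 𝒴) : ℝ :=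
  cexW p (fun ω => posP ((y.length : ℝ) - (S ω : ℝ))) (fun ω => ExtN y (pathOf Y ω)) +
    lam * cprW p (fun ω => y.length < S ω) (fun ω => ExtN y (pathOf Y ω))

end

section Aux

open Finset

variable {Ω 𝒴 : Type*} [Fintype Ω]

lemma detKer_nonneg (t : (ℕ → 𝒴) → ℕ) (n : ℕ) (f : ℕ → 𝒴) : 0 ≤ detKer t n f := by
  unfold detKer; split <;> norm_num

lemma detKer_meas {t : (ℕ → 𝒴) → ℕ} (ht : IsStopFun t) (n : ℕ) (f g : ℕ → 𝒴)
    (hfg : ∀ i, 1 ≤ i → i ≤ n → f i = g i) : detKer t n g = detKer t n f := by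
  unfold detKer
  by_cases h : t f = n
  · have : t g = t f := ht f g (fun i hi hi' => hfg i hi (hi'.trans h.le))
    simp [h, this]
  · have h2 : t g ≠ n := by
      intro hg
      exact h (ht g f (fun i hi hi' => (hfg i hi (hi'.trans hg.le)).symm) ▸ hg)
    simp [h, h2]

lemma detKer_sum {t : (ℕ → 𝒴) → ℕ} {κ : ℕ} (hb : ∀ f, 1 ≤ t f ∧ t f ≤ κ) (f : ℕ → 𝒴) :
    ∑ n ∈ Finset.Icc 1 κ, detKer t n f = 1 := by
  unfold detKer
  rw [Finset.sum_ite_eq]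
  simp [Finset.mem_Icc, (hb f).1, (hb f).2]

lemma detKer_isRandST {t : (ℕ → 𝒴) → ℕ} {κ : ℕ} (ht : IsStopFun t)
    (hb : ∀ f, 1 ≤ t f ∧ t f ≤ κ) : IsRandST (detKer t) κ := by
  exact ⟨fun n f => detKer_nonneg t n f, fun n f g h => detKer_meas ht n f g h,
    fun f => detKer_sum hb f⟩

end Aux

section Aux2

open Finset

variable {Ω 𝒴 : Type*} [Fintype Ω]

lemma exW_cost_eq (p : Ω → ℝ) (Y : ℕ → Ω → 𝒴) (S : Ω → ℕ) (κ : ℕ) (lam : ℝ)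
    (q : ℕ → (ℕ → 𝒴) → ℝ) :
    exW p (fun ω => ∑ n ∈ Finset.Icc 1 κ, q n (pathOf Y ω) *
      (posP ((n:ℝ) - (S ω:ℝ)) + lam * (if n < S ω then 1 else 0))) =
    delayR p Y S κ q + lam * faR p Y S κ q := by
  simp only [delayR, faR, exW]
  rw [Finset.mul_sum, ← Finset.sum_add_distrib]
  apply Finset.sum_congr rfl
  intro ω _
  rw [Finset.mul_sum, Finset.mul_sum, Finset.mul_sum, Finset.mul_sum, ← Finset.sum_add_distrib]
  apply Finset.sum_congr rfl
  intro n _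
  ring

lemma exW_kernel_lin (p : Ω → ℝ) (Y : ℕ → Ω → 𝒴) (κ : ℕ) (θ : ℝ)
    (q₁ q₂ : ℕ → (ℕ → 𝒴) → ℝ) (g : ℕ → Ω → ℝ) :
    exW p (fun ω => ∑ n ∈ Finset.Icc 1 κ,
      (θ * q₁ n (pathOf Y ω) + (1-θ) * q₂ n (pathOf Y ω)) * g n ω) =
    θ * exW p (fun ω => ∑ n ∈ Finset.Icc 1 κ, q₁ n (pathOf Y ω) * g n ω) +
    (1-θ) * exW p (fun ω => ∑ n ∈ Finset.Icc 1 κ, q₂ n (pathOf Y ω) * g n ω) := by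
  simp only [exW]
  rw [Finset.mul_sum, Finset.mul_sum, ← Finset.sum_add_distrib]
  apply Finset.sum_congr rfl
  intro ω _
  rw [Finset.mul_sum, Finset.mul_sum, Finset.mul_sum, Finset.mul_sum, Finset.mul_sum,
    ← Finset.sum_add_distrib]
  apply Finset.sum_congr rfl
  intro n _
  ring

lemma mix_exists (p : Ω → ℝ) (Y : ℕ → Ω → 𝒴) (S : Ω → ℕ) (κ : ℕ)
    {t₁ t₂ : (ℕ → 𝒴) → ℕ} (h₁ : IsStopFun t₁) (hb₁ : ∀ f, 1 ≤ t₁ f ∧ t₁ f ≤ κ)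
    (h₂ : IsStopFun t₂) (hb₂ : ∀ f, 1 ≤ t₂ f ∧ t₂ f ≤ κ)
    {θ : ℝ} (hθ0 : 0 ≤ θ) (hθ1 : θ ≤ 1) :
    ∃ q, IsRandST q κ ∧
      faR p Y S κ q = θ * faR p Y S κ (detKer t₁) + (1-θ) * faR p Y S κ (detKer t₂) ∧
      delayR p Y S κ q = θ * delayR p Y S κ (detKer t₁) + (1-θ) * delayR p Y S κ (detKer t₂) := by
  refine ⟨fun n f => θ * detKer t₁ n f + (1-θ) * detKer t₂ n f, ⟨?_, ?_, ?_⟩, ?_, ?_⟩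
  · intro n f
    dsimp only
    have a := detKer_nonneg t₁ n f
    have b := detKer_nonneg t₂ n f
    nlinarith
  · intro n f g h
    dsimp only
    rw [detKer_meas h₁ n f g h, detKer_meas h₂ n f g h]
  · intro f
    dsimp only
    rw [Finset.sum_add_distrib, ← Finset.mul_sum, ← Finset.mul_sum,
      detKer_sum hb₁ f, detKer_sum hb₂ f]
    ring
  · exact exW_kernel_lin p Y κ θ _ _ _
  · exact exW_kernel_lin p Y κ θ _ _ _

lemma faR_nonneg (p : Ω → ℝ) (hp : IsProbW p) (Y : ℕ → Ω → 𝒴) (S : Ω → ℕ) (κ : ℕ)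
    {q : ℕ → (ℕ → 𝒴) → ℝ} (hq : ∀ n f, 0 ≤ q n f) : 0 ≤ faR p Y S κ q := by
  unfold faR exW
  apply Finset.sum_nonneg
  intro ω _
  apply mul_nonneg (hp.1 ω)
  apply Finset.sum_nonneg
  intro n _
  apply mul_nonneg (hq n _)
  split <;> norm_num

lemma delayR_nonneg (p : Ω → ℝ) (hp : IsProbW p) (Y : ℕ → Ω → 𝒴) (S : Ω → ℕ) (κ : ℕ)
    {q : ℕ → (ℕ → 𝒴) → ℝ} (hq : ∀ n f, 0 ≤ q n f) : 0 ≤ delayR p Y S κ q := by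
  unfold delayR exW
  apply Finset.sum_nonneg
  intro ω _
  apply mul_nonneg (hp.1 ω)
  apply Finset.sum_nonneg
  intro n _
  exact mul_nonneg (hq n _) (le_max_right _ _)

lemma vset_finite (p : Ω → ℝ) (Y : ℕ → Ω → 𝒴) (S : Ω → ℕ) (κ : ℕ) :
    {x : ℝ × ℝ | ∃ t : (ℕ → 𝒴) → ℕ, IsStopFun t ∧ (∀ f, 1 ≤ t f ∧ t f ≤ κ) ∧
      x = (faR p Y S κ (detKer t), delayR p Y S κ (detKer t))}.Finite := by
  have hsub : {x : ℝ × ℝ | ∃ t : (ℕ → 𝒴) → ℕ, IsStopFun t ∧ (∀ f, 1 ≤ t f ∧ t f ≤ κ) ∧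
      x = (faR p Y S κ (detKer t), delayR p Y S κ (detKer t))} ⊆
      Set.range (fun σ : Ω → Fin (κ+1) =>
        ((exW p fun ω => ∑ n ∈ Finset.Icc 1 κ,
            (if ((σ ω : ℕ) = n) then (1:ℝ) else 0) * (if n < S ω then 1 else 0)),
         (exW p fun ω => ∑ n ∈ Finset.Icc 1 κ,
            (if ((σ ω : ℕ) = n) then (1:ℝ) else 0) * posP ((n:ℝ) - (S ω:ℝ))))) := by
    rintro x ⟨t, ht, hb, rfl⟩
    exact ⟨fun ω => ⟨t (pathOf Y ω), Nat.lt_succ_of_le (hb _).2⟩, rfl⟩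
  exact (Set.finite_range _).subset hsub

end Aux2

section Aux3

open Finset

variable {Ω 𝒴 : Type*} [Fintype Ω]

lemma exists_det_le_cost (p : Ω → ℝ) (hp : IsProbW p) (Y : ℕ → Ω → 𝒴) (κ : ℕ) (hκ : 1 ≤ κ)
    (q : ℕ → (ℕ → 𝒴) → ℝ) (hq : IsRandST q κ) (c : ℕ → Ω → ℝ) :
    ∃ t : (ℕ → 𝒴) → ℕ, IsStopFun t ∧ (∀ f, 1 ≤ t f ∧ t f ≤ κ) ∧
      exW p (fun ω => ∑ n ∈ Finset.Icc 1 κ, detKer t n (pathOf Y ω) * c n ω) ≤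
      exW p (fun ω => ∑ n ∈ Finset.Icc 1 κ, q n (pathOf Y ω) * c n ω) := by
  obtain ⟨hq0, hqm, hq1⟩ := hq
  have hΩ : Nonempty Ω := by
    by_contra h
    rw [not_nonempty_iff] at h
    have := hp.2
    rw [Finset.sum_eq_zero (fun ω _ => (h.false ω).elim)] at this
    norm_num at this
  -- cumulative kernel
  set Qc : ℕ → (ℕ → 𝒴) → ℝ := fun n f => ∑ k ∈ Finset.Icc 1 n, q k f with hQcdef
  have hQc0 : ∀ f, Qc 0 f = 0 := by intro f; simp [hQcdef]
  have hQcκ : ∀ f, Qc κ f = 1 := hq1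
  have hQmono : ∀ f {a b : ℕ}, a ≤ b → Qc a f ≤ Qc b f := by
    intro f a b hab
    exact Finset.sum_le_sum_of_subset_of_nonneg
      (Finset.Icc_subset_Icc_right hab) (fun k _ _ => hq0 k f)
  have hQmeas : ∀ n (f g : ℕ → 𝒴), (∀ i, 1 ≤ i → i ≤ n → f i = g i) → Qc n g = Qc n f := by
    intro n f g hfg
    apply Finset.sum_congr rfl
    intro k hk
    exact hqm k f g (fun i hi hik => hfg i hi (hik.trans (Finset.mem_Icc.mp hk).2))
  have hQnonneg : ∀ n f, 0 ≤ Qc n f := by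
    intro n f; exact Finset.sum_nonneg (fun k _ => hq0 k f)
  -- quantile stopping functions
  set tu : ℝ → (ℕ → 𝒴) → ℕ := fun u f => sInf {n | 1 ≤ n ∧ u ≤ Qc n f} with htudef
  have hmemκ : ∀ (u : ℝ) f, u ≤ 1 → κ ∈ {n | 1 ≤ n ∧ u ≤ Qc n f} := by
    intro u f hu; exact ⟨hκ, by rw [hQcκ]; exact hu⟩
  have htu_mem : ∀ (u : ℝ) f, u ≤ 1 → 1 ≤ tu u f ∧ u ≤ Qc (tu u f) f := by
    intro u f hu; exact Nat.sInf_mem ⟨κ, hmemκ u f hu⟩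
  have htu_le : ∀ (u : ℝ) f, u ≤ 1 → tu u f ≤ κ := by
    intro u f hu; exact Nat.sInf_le (hmemκ u f hu)
  have htu_stop : ∀ u : ℝ, u ≤ 1 → IsStopFun (tu u) := by
    intro u hu f g hfg
    have hmf := htu_mem u f hu
    have hgin : tu u f ∈ {n | 1 ≤ n ∧ u ≤ Qc n g} :=
      ⟨hmf.1, by rw [hQmeas (tu u f) f g hfg]; exact hmf.2⟩
    have h1 : tu u g ≤ tu u f := Nat.sInf_le hgin
    have hmg := Nat.sInf_mem (⟨tu u f, hgin⟩ : {n | 1 ≤ n ∧ u ≤ Qc n g}.Nonempty)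
    have h2 : tu u f ≤ tu u g := by
      apply Nat.sInf_le
      refine ⟨hmg.1, ?_⟩
      rw [← hQmeas (tu u g) f g (fun i hi hik => hfg i hi (hik.trans h1))]
      exact hmg.2
    omega
  have hchar : ∀ (u : ℝ) f n, 0 < u → u ≤ 1 → 1 ≤ n →
      (tu u f = n ↔ (Qc (n-1) f < u ∧ u ≤ Qc n f)) := by
    intro u f n hu0 hu1 hn1
    constructor
    · intro h
      refine ⟨?_, by rw [← h]; exact (htu_mem u f hu1).2⟩
      by_contra hcon
      push_neg at hcon
      rcases Nat.lt_or_ge 1 n with hn2 | hn2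
      · have : tu u f ≤ n - 1 := Nat.sInf_le ⟨by omega, hcon⟩
        omega
      · have hn : n = 1 := by omega
        rw [hn] at hcon
        simp only [Nat.sub_self] at hcon
        rw [hQc0] at hcon
        linarith
    · rintro ⟨hlt, hle⟩
      have hmem : n ∈ {n | 1 ≤ n ∧ u ≤ Qc n f} := ⟨hn1, hle⟩
      have h1 : tu u f ≤ n := Nat.sInf_le hmem
      by_contra hcon
      have h2 : tu u f ≤ n - 1 := by omega
      have := (htu_mem u f hu1).2
      have : u ≤ Qc (n-1) f := this.trans (hQmono f h2)
      linarith
  -- breakpoints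
  set Bfin : Finset ℝ :=
    insert 0 ((Finset.Icc 1 κ ×ˢ (Finset.univ : Finset Ω)).image
      (fun z => Qc z.1 (pathOf Y z.2))) with hBdef
  have h0B : (0:ℝ) ∈ Bfin := Finset.mem_insert_self _ _
  have h1B : (1:ℝ) ∈ Bfin := by
    refine Finset.mem_insert_of_mem (Finset.mem_image.mpr
      ⟨(κ, Classical.arbitrary Ω), ?_, hQcκ _⟩)
    simp [Finset.mem_Icc, hκ]
  have hBnonneg : ∀ x ∈ Bfin, 0 ≤ x := by
    intro x hx
    rcases Finset.mem_insert.mp hx with h | h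
    · rw [h]
    · obtain ⟨z, _, rfl⟩ := Finset.mem_image.mp h
      exact hQnonneg _ _
  have hBle1 : ∀ x ∈ Bfin, x ≤ 1 := by
    intro x hx
    rcases Finset.mem_insert.mp hx with h | h
    · rw [h]; norm_num
    · obtain ⟨z, hz, rfl⟩ := Finset.mem_image.mp h
      have := (Finset.mem_Icc.mp (Finset.mem_product.mp hz).1).2
      rw [← hQcκ (pathOf Y z.2)]
      exact hQmono _ this
  have hQB : ∀ n ω, n ≤ κ → Qc n (pathOf Y ω) ∈ Bfin := by
    intro n ω hn
    rcases Nat.eq_zero_or_pos n with h | h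
    · rw [h, hQc0]; exact h0B
    · exact Finset.mem_insert_of_mem (Finset.mem_image.mpr
        ⟨(n, ω), by simp [Finset.mem_Icc]; omega, rfl⟩)
  set k := Bfin.card with hkdef
  have hk2 : 2 ≤ k := by
    have : 1 < Bfin.card := Finset.one_lt_card.mpr ⟨0, h0B, 1, h1B, by norm_num⟩
    omega
  set E := Bfin.orderIsoOfFin (rfl : Bfin.card = k) with hEdef
  set e : ℕ → ℝ := fun j => if h : j < k then (E ⟨j, h⟩ : ℝ) else 1 with hedef
  have heB : ∀ j (h : j < k), e j ∈ Bfin := by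
    intro j h; simp only [hedef, dif_pos h]; exact (E ⟨j, h⟩).2
  have hemono : ∀ i j, i < j → j < k → e i < e j := by
    intro i j hij hj
    simp only [hedef, dif_pos hj, dif_pos (hij.trans hj)]
    exact_mod_cast Subtype.coe_lt_coe.mpr (E.strictMono (by exact_mod_cast hij : (⟨i, hij.trans hj⟩ : Fin k) < ⟨j, hj⟩))
  have hemono' : ∀ i j, i ≤ j → j < k → e i ≤ e j := by
    intro i j hij hj
    rcases Nat.eq_or_lt_of_le hij with h | h
    · rw [h]
    · exact (hemono i j h hj).le
  have hesurj : ∀ x ∈ Bfin, ∃ j, j < k ∧ e j = x := by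
    intro x hx
    refine ⟨(E.symm ⟨x, hx⟩).1, (E.symm ⟨x, hx⟩).2, ?_⟩
    simp only [hedef, dif_pos (E.symm ⟨x, hx⟩).2]
    rw [dif_pos (show (E.symm ⟨x, hx⟩).1 < k from (E.symm ⟨x, hx⟩).2), Fin.eta]
    rw [OrderIso.apply_symm_apply]
  have he0 : e 0 = 0 := by
    obtain ⟨j, hj, hej⟩ := hesurj 0 h0B
    have h1 : e 0 ≤ e j := hemono' 0 j (Nat.zero_le _) hj
    rw [hej] at h1
    exact le_antisymm h1 (hBnonneg _ (heB 0 (by omega)))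
  have hetop : e (k-1) = 1 := by
    obtain ⟨j, hj, hej⟩ := hesurj 1 h1B
    have h1 : e j ≤ e (k-1) := hemono' j (k-1) (by omega) (by omega)
    rw [hej] at h1
    exact le_antisymm (hBle1 _ (heB (k-1) (by omega))) h1
  set m := k - 1 with hmdef
  have hm1 : 1 ≤ m := by omega
  have heu : ∀ j, j < m → 0 < e (j+1) ∧ e (j+1) ≤ 1 := by
    intro j hj
    constructor
    · rw [← he0]; exact hemono 0 (j+1) (by omega) (by omega)
    · rw [← hetop]; exact hemono' (j+1) (k-1) (by omega) (by omega)
  have hwsum : ∑ j ∈ Finset.range m, (e (j+1) - e j) = 1 := by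
    rw [Finset.sum_range_sub, he0, hetop]
    ring
  -- key identity
  have hkey : ∀ ω, ∀ n ∈ Finset.Icc 1 κ, q n (pathOf Y ω) =
      ∑ j ∈ Finset.range m, (e (j+1) - e j) * detKer (tu (e (j+1))) n (pathOf Y ω) := by
    intro ω n hn
    obtain ⟨hn1, hnκ⟩ := Finset.mem_Icc.mp hn
    obtain ⟨i₁, hi₁k, hei₁⟩ := hesurj (Qc (n-1) (pathOf Y ω)) (hQB (n-1) ω (by omega))
    obtain ⟨i₂, hi₂k, hei₂⟩ := hesurj (Qc n (pathOf Y ω)) (hQB n ω hnκ)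
    have hqn : q n (pathOf Y ω) = Qc n (pathOf Y ω) - Qc (n-1) (pathOf Y ω) := by
      have h := Finset.sum_Icc_succ_top (by omega : 1 ≤ (n-1) + 1)
        (fun i => q i (pathOf Y ω))
      rw [show (n-1) + 1 = n by omega] at h
      simp only [hQcdef]
      rw [h]
      ring
    have hi12 : i₁ ≤ i₂ := by
      by_contra hcon
      push_neg at hcon
      have := hemono i₂ i₁ hcon hi₁k
      rw [hei₁, hei₂] at this
      have := hQmono (pathOf Y ω) (by omega : n - 1 ≤ n)
      linarith
    have hiff : ∀ j, j < m → (tu (e (j+1)) (pathOf Y ω) = n ↔ (i₁ ≤ j ∧ j < i₂)) := by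
      intro j hj
      obtain ⟨hu0, hu1⟩ := heu j hj
      rw [hchar (e (j+1)) (pathOf Y ω) n hu0 hu1 hn1]
      constructor
      · rintro ⟨hlt, hle⟩
        constructor
        · by_contra hcon
          push_neg at hcon
          have : e (j+1) ≤ e i₁ := hemono' (j+1) i₁ (by omega) hi₁k
          rw [hei₁] at this
          linarith
        · by_contra hcon
          push_neg at hcon
          have : e i₂ < e (j+1) := hemono i₂ (j+1) (by omega) (by omega)
          rw [hei₂] at this
          linarith
      · rintro ⟨hj1, hj2⟩
        constructor
        · rw [← hei₁]
          exact hemono i₁ (j+1) (by omega) (by omega)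
        · rw [← hei₂]
          exact hemono' (j+1) i₂ (by omega) hi₂k
    have step1 : ∑ j ∈ Finset.range m, (e (j+1) - e j) * detKer (tu (e (j+1))) n (pathOf Y ω) =
        ∑ j ∈ Finset.range m, (if i₁ ≤ j ∧ j < i₂ then e (j+1) - e j else 0) := by
      apply Finset.sum_congr rfl
      intro j hj
      rw [Finset.mem_range] at hj
      by_cases hc : tu (e (j+1)) (pathOf Y ω) = n
      · rw [detKer, if_pos hc, if_pos ((hiff j hj).mp hc)]
        ring
      · rw [detKer, if_neg hc, if_neg (fun h => hc ((hiff j hj).mpr h))]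
        ring
    rw [step1, Finset.sum_ite, Finset.sum_const_zero, add_zero]
    have hfilter : (Finset.range m).filter (fun j => i₁ ≤ j ∧ j < i₂) = Finset.Ico i₁ i₂ := by
      ext j
      simp only [Finset.mem_filter, Finset.mem_range, Finset.mem_Ico]
      constructor
      · rintro ⟨_, h1, h2⟩; exact ⟨h1, h2⟩
      · rintro ⟨h1, h2⟩; exact ⟨by omega, h1, h2⟩
    rw [hfilter, Finset.sum_Ico_eq_sub _ hi12, Finset.sum_range_sub, Finset.sum_range_sub,
      hei₁, hei₂, hqn]
    ring
  -- total cost identity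
  have hcost : exW p (fun ω => ∑ n ∈ Finset.Icc 1 κ, q n (pathOf Y ω) * c n ω) =
      ∑ j ∈ Finset.range m, (e (j+1) - e j) *
        exW p (fun ω => ∑ n ∈ Finset.Icc 1 κ, detKer (tu (e (j+1))) n (pathOf Y ω) * c n ω) := by
    simp only [exW]
    have lhs1 : ∀ ω : Ω, p ω * ∑ n ∈ Finset.Icc 1 κ, q n (pathOf Y ω) * c n ω =
        ∑ j ∈ Finset.range m, ∑ n ∈ Finset.Icc 1 κ,
          (e (j+1) - e j) * (p ω * (detKer (tu (e (j+1))) n (pathOf Y ω) * c n ω)) := by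
      intro ω
      rw [Finset.mul_sum]
      rw [Finset.sum_comm]
      rw [← Finset.sum_congr rfl (fun n hn => ?_)]
      rw [hkey ω n hn, Finset.sum_mul, Finset.mul_sum]
      apply Finset.sum_congr rfl
      intro j _
      ring
    calc ∑ ω : Ω, p ω * ∑ n ∈ Finset.Icc 1 κ, q n (pathOf Y ω) * c n ω
        = ∑ ω : Ω, ∑ j ∈ Finset.range m, ∑ n ∈ Finset.Icc 1 κ,
            (e (j+1) - e j) * (p ω * (detKer (tu (e (j+1))) n (pathOf Y ω) * c n ω)) := by
          exact Finset.sum_congr rfl (fun ω _ => lhs1 ω)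
      _ = ∑ j ∈ Finset.range m, ∑ ω : Ω, ∑ n ∈ Finset.Icc 1 κ,
            (e (j+1) - e j) * (p ω * (detKer (tu (e (j+1))) n (pathOf Y ω) * c n ω)) :=
          Finset.sum_comm
      _ = ∑ j ∈ Finset.range m, (e (j+1) - e j) *
            ∑ ω : Ω, p ω * ∑ n ∈ Finset.Icc 1 κ, detKer (tu (e (j+1))) n (pathOf Y ω) * c n ω := by
          apply Finset.sum_congr rfl
          intro j _
          rw [Finset.mul_sum]
          apply Finset.sum_congr rfl
          intro ω _
          rw [Finset.mul_sum, Finset.mul_sum]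
  -- choose the best j
  have hex : ∃ j ∈ Finset.range m,
      exW p (fun ω => ∑ n ∈ Finset.Icc 1 κ, detKer (tu (e (j+1))) n (pathOf Y ω) * c n ω) ≤
      exW p (fun ω => ∑ n ∈ Finset.Icc 1 κ, q n (pathOf Y ω) * c n ω) := by
    by_contra hcon
    push_neg at hcon
    have hlt : ∑ j ∈ Finset.range m, (e (j+1) - e j) *
        exW p (fun ω => ∑ n ∈ Finset.Icc 1 κ, q n (pathOf Y ω) * c n ω) <
        ∑ j ∈ Finset.range m, (e (j+1) - e j) *
        exW p (fun ω => ∑ n ∈ Finset.Icc 1 κ, detKer (tu (e (j+1))) n (pathOf Y ω) * c n ω) := by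
      apply Finset.sum_lt_sum
      · intro j hj
        rw [Finset.mem_range] at hj
        have hw : 0 ≤ e (j+1) - e j := by
          have := hemono j (j+1) (by omega) (by omega)
          linarith
        exact mul_le_mul_of_nonneg_left (hcon j (Finset.mem_range.mpr hj)).le hw
      · refine ⟨0, Finset.mem_range.mpr (by omega), ?_⟩
        have hw : 0 < e 1 - e 0 := by
          have := hemono 0 1 (by omega) (by omega)
          linarith
        exact mul_lt_mul_of_pos_left (hcon 0 (Finset.mem_range.mpr (by omega))) hw
    rw [← Finset.sum_mul, hwsum, one_mul, ← hcost] at hlt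
    exact lt_irrefl _ hlt
  obtain ⟨j, hj, hle⟩ := hex
  rw [Finset.mem_range] at hj
  obtain ⟨hu0, hu1⟩ := heu j hj
  exact ⟨tu (e (j+1)), htu_stop _ hu1,
    fun f => ⟨(htu_mem _ f hu1).1, htu_le _ f hu1⟩, hle⟩

end Aux3

/-- strong Lagrange duality for the tracking stopping time problem,
with the inner minimization restricted to non-randomized stopping times bounded by κ. -/
theorem tst_strong_duality
    {Ω 𝒳 𝒴 : Type*} [Fintype Ω]
    (p : Ω → ℝ) (hp : IsProbW p) (X : ℕ → Ω → 𝒳) (Y : ℕ → Ω → 𝒴) (κ : ℕ) (hκ : 1 ≤ κ)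
    (S : Ω → ℕ) (hS : IsSTW X S) (hSb : ∀ ω, 1 ≤ S ω ∧ S ω ≤ κ)
    (α : ℝ) (hα : α ∈ Set.Icc (0 : ℝ) 1) :
    dW p Y S κ α =
      sSup {v | ∃ lam : ℝ, 0 ≤ lam ∧
        v = sInf {c | ∃ t : (ℕ → 𝒴) → ℕ, IsStopFun t ∧ (∀ f, 1 ≤ t f ∧ t f ≤ κ) ∧
          c = delayR p Y S κ (detKer t) + lam * faR p Y S κ (detKer t) - lam * α}} := by
  classical
  obtain ⟨hα0, hα1⟩ := hα
  set C : ℝ → Set ℝ := fun lam =>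
    {c | ∃ t : (ℕ → 𝒴) → ℕ, IsStopFun t ∧ (∀ f, 1 ≤ t f ∧ t f ≤ κ) ∧
      c = delayR p Y S κ (detKer t) + lam * faR p Y S κ (detKer t) - lam * α} with hCdef
  set Dset : Set ℝ :=
    {v | ∃ q, IsRandST q κ ∧ faR p Y S κ q ≤ α ∧ v = delayR p Y S κ q} with hDdef
  show sInf Dset = sSup {v | ∃ lam : ℝ, 0 ≤ lam ∧ v = sInf (C lam)}
  set Mset : Set ℝ := {v | ∃ lam : ℝ, 0 ≤ lam ∧ v = sInf (C lam)} with hMdef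
  -- the constant-κ stopping function
  have ht₀ : IsStopFun (fun _ : ℕ → 𝒴 => κ) := fun f g _ => rfl
  have hb₀ : ∀ f : ℕ → 𝒴, 1 ≤ (fun _ : ℕ → 𝒴 => κ) f ∧ (fun _ : ℕ → 𝒴 => κ) f ≤ κ :=
    fun f => ⟨hκ, le_refl _⟩
  have hfa₀ : faR p Y S κ (detKer (fun _ : ℕ → 𝒴 => κ)) = 0 := by
    simp only [faR, exW, detKer]
    apply Finset.sum_eq_zero
    intro ω _
    rw [Finset.sum_eq_zero, mul_zero]
    intro n hn
    by_cases h : κ = n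
    · have h2 : ¬ (n < S ω) := by have := (hSb ω).2; omega
      simp [h2]
    · simp [h]
  -- basic facts about Dset
  have hfaR_nn : ∀ (t : (ℕ → 𝒴) → ℕ), 0 ≤ faR p Y S κ (detKer t) :=
    fun t => faR_nonneg p hp Y S κ (fun n f => detKer_nonneg t n f)
  have hdelR_nn : ∀ (t : (ℕ → 𝒴) → ℕ), 0 ≤ delayR p Y S κ (detKer t) :=
    fun t => delayR_nonneg p hp Y S κ (fun n f => detKer_nonneg t n f)
  have hDne : Dset.Nonempty :=
    ⟨delayR p Y S κ (detKer (fun _ : ℕ → 𝒴 => κ)),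
      detKer (fun _ : ℕ → 𝒴 => κ), detKer_isRandST ht₀ hb₀, by rw [hfa₀]; exact hα0, rfl⟩
  have hDbdd : BddBelow Dset := by
    refine ⟨0, ?_⟩
    rintro v ⟨q, hqr, _, rfl⟩
    exact delayR_nonneg p hp Y S κ hqr.1
  have hCne : ∀ lam : ℝ, (C lam).Nonempty :=
    fun lam => ⟨_, (fun _ : ℕ → 𝒴 => κ), ht₀, hb₀, rfl⟩
  have hCbdd : ∀ lam : ℝ, 0 ≤ lam → BddBelow (C lam) := by
    intro lam hlam
    refine ⟨-(lam * α), ?_⟩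
    rintro c ⟨t, ht, hb, rfl⟩
    have h1 := hfaR_nn t
    have h2 := hdelR_nn t
    nlinarith
  -- membership facts
  have hDmem : ∀ (t : (ℕ → 𝒴) → ℕ), IsStopFun t → (∀ f, 1 ≤ t f ∧ t f ≤ κ) →
      faR p Y S κ (detKer t) ≤ α → sInf Dset ≤ delayR p Y S κ (detKer t) := by
    intro t ht hb hfa
    exact csInf_le hDbdd ⟨detKer t, detKer_isRandST ht hb, hfa, rfl⟩
  -- weak duality
  have hweak : ∀ lam : ℝ, 0 ≤ lam → sInf (C lam) ≤ sInf Dset := by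
    intro lam hlam
    apply le_csInf hDne
    rintro v ⟨q, hqr, hfa, rfl⟩
    obtain ⟨t, ht, hb, hle⟩ := exists_det_le_cost p hp Y κ hκ q hqr
      (fun n ω => posP ((n:ℝ) - (S ω:ℝ)) + lam * (if n < S ω then 1 else 0))
    rw [exW_cost_eq p Y S κ lam, exW_cost_eq p Y S κ lam] at hle
    have h1 : sInf (C lam) ≤ delayR p Y S κ (detKer t) + lam * faR p Y S κ (detKer t) - lam * α :=
      csInf_le (hCbdd lam hlam) ⟨t, ht, hb, rfl⟩
    have h2 : lam * faR p Y S κ q ≤ lam * α := mul_le_mul_of_nonneg_left hfa hlam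
    linarith
  have hMne : Mset.Nonempty := ⟨sInf (C 0), 0, le_refl _, rfl⟩
  have hMbdd : BddAbove Mset := by
    refine ⟨sInf Dset, ?_⟩
    rintro v ⟨lam, hlam, rfl⟩
    exact hweak lam hlam
  apply le_antisymm
  swap
  · exact csSup_le hMne (by rintro v ⟨lam, hlam, rfl⟩; exact hweak lam hlam)
  -- strong duality: construct the optimal multiplier
  · set d := sInf Dset with hddef
    -- feasibility of mixtures
    have hmix : ∀ (t₁ t₂ : (ℕ → 𝒴) → ℕ), IsStopFun t₁ → (∀ f, 1 ≤ t₁ f ∧ t₁ f ≤ κ) →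
        IsStopFun t₂ → (∀ f, 1 ≤ t₂ f ∧ t₂ f ≤ κ) → ∀ θ : ℝ, 0 ≤ θ → θ ≤ 1 →
        θ * faR p Y S κ (detKer t₁) + (1-θ) * faR p Y S κ (detKer t₂) ≤ α →
        d ≤ θ * delayR p Y S κ (detKer t₁) + (1-θ) * delayR p Y S κ (detKer t₂) := by
      intro t₁ t₂ h₁ hb₁ h₂ hb₂ θ hθ0 hθ1 hfa
      obtain ⟨q, hqr, hqfa, hqdel⟩ := mix_exists p Y S κ h₁ hb₁ h₂ hb₂ hθ0 hθ1
      rw [← hqdel]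
      exact csInf_le hDbdd ⟨q, hqr, by rw [hqfa]; exact hfa, rfl⟩
    -- the finite set of candidate multipliers
    set Vset : Set (ℝ × ℝ) := {x | ∃ t : (ℕ → 𝒴) → ℕ, IsStopFun t ∧
      (∀ f, 1 ≤ t f ∧ t f ≤ κ) ∧
      x = (faR p Y S κ (detKer t), delayR p Y S κ (detKer t))} with hVdef
    set Λ : Set ℝ := insert 0 ((fun x : ℝ × ℝ => (d - x.2) / (x.1 - α)) ''
      {x ∈ Vset | α < x.1}) with hΛdef
    have hΛfin : Λ.Finite :=
      Set.Finite.insert _ (Set.Finite.image _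
        ((vset_finite p Y S κ).subset (Set.sep_subset _ _)))
    have hΛne : (0:ℝ) ∈ Λ := Set.mem_insert _ _
    set lam : ℝ := hΛfin.toFinset.max' ⟨0, hΛfin.mem_toFinset.mpr hΛne⟩ with hlamdef
    have hlam_mem : lam ∈ Λ := hΛfin.mem_toFinset.mp (Finset.max'_mem _ _)
    have hlam_ub : ∀ x ∈ Λ, x ≤ lam :=
      fun x hx => Finset.le_max' _ x (hΛfin.mem_toFinset.mpr hx)
    have hlam0 : 0 ≤ lam := hlam_ub 0 hΛne
    -- the key claim
    have hclaim : ∀ (t : (ℕ → 𝒴) → ℕ), IsStopFun t → (∀ f, 1 ≤ t f ∧ t f ≤ κ) →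
        d ≤ delayR p Y S κ (detKer t) + lam * (faR p Y S κ (detKer t) - α) := by
      intro t ht hb
      set a := faR p Y S κ (detKer t) with hadef
      set b := delayR p Y S κ (detKer t) with hbdef
      rcases lt_trichotomy a α with hlt | heq | hgt
      · -- a < α
        rcases Set.mem_insert_iff.mp hlam_mem with h0 | hmem
        · rw [h0]
          have := hDmem t ht hb hlt.le
          linarith
        · obtain ⟨x, ⟨⟨t', ht', hb', hx⟩, hxgt⟩, hxl⟩ := hmem
          subst hx
          simp only at hxgt hxl
          set a' := faR p Y S κ (detKer t') with ha'def
          set b' := delayR p Y S κ (detKer t') with hb'def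
          have hden : (0:ℝ) < a' - α := by linarith
          have hb'eq : lam * (a' - α) = d - b' := by
            rw [← hxl]
            field_simp
          set θ := (α - a) / (a' - a) with hθdef
          have hda : (0:ℝ) < a' - a := by linarith
          have hθ0 : 0 ≤ θ := div_nonneg (by linarith) hda.le
          have hθ1 : θ < 1 := by
            rw [hθdef, div_lt_one hda]
            linarith
          have hθeq : θ * a' + (1-θ) * a = α := by
            rw [hθdef]
            field_simp
            ring
          have hfeas : θ * a' + (1-θ) * a ≤ α := le_of_eq hθeq
          have hd : d ≤ θ * b' + (1-θ) * b :=
            hmix t' t ht' hb' ht hb θ hθ0 hθ1.le hfeas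
          by_contra hcon
          push_neg at hcon
          -- hcon : b + lam * (a - α) < d
          have key : θ * b' + (1-θ) * b < d := by
            have h1 : b' = d - lam * (a' - α) := by linarith
            have h2 : b < d - lam * (a - α) := by linarith
            have h3 : 0 < 1 - θ := by linarith
            calc θ * b' + (1-θ) * b
                < θ * (d - lam * (a' - α)) + (1-θ) * (d - lam * (a - α)) := by
                  have := mul_le_mul_of_nonneg_left (le_of_eq h1) hθ0
                  nlinarith
              _ = d - lam * (θ * a' + (1-θ) * a - α) := by ring
              _ = d := by rw [hθeq]; ring
          linarith
      · rw [heq]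
        have := hDmem t ht hb heq.le
        linarith
      · -- α < a
        have hmem : (d - b) / (a - α) ∈ Λ :=
          Set.mem_insert_of_mem _ ⟨(a, b), ⟨⟨t, ht, hb, rfl⟩, hgt⟩, rfl⟩
        have h1 : (d - b) / (a - α) ≤ lam := hlam_ub _ hmem
        have h2 : d - b ≤ lam * (a - α) := by
          rw [div_le_iff₀ (by linarith : (0:ℝ) < a - α)] at h1
          linarith
        linarith
    have hdle : d ≤ sInf (C lam) := by
      apply le_csInf (hCne lam)
      rintro c ⟨t, ht, hb, rfl⟩
      have := hclaim t ht hb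
      linarith
    calc d ≤ sInf (C lam) := hdle
      _ ≤ sSup Mset := le_csSup hMbdd ⟨lam, hlam0, rfl⟩
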